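/- Let G be a finite simple graph and l ∈ ℕ. The map sending an edge subset β ∈ F_2^E to its degree-parity vector Bᵀβ ∈ F_2^V is injective on the set of edge subsets of cardinality at most l if and only if G has no cycle of length at most 2l (equivalently, the girth of G is at least 2l+1). -/

import Mathlib

open Matrix

/-- Edge-vertex incidence matrix of `G` over `F_2`: `B e v = 1` iff `v` is an endpoint of `e`. -/
def SimpleGraph.inc {V : Type*} [Fintype V] [DecidableEq V] (G : SimpleGraph V)
    [DecidableRel G.Adj] : Matrix G.edgeSet V (ZMod 2) :=
  fun e v => if v ∈ (e : Sym2 V) then 1 else 0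

/-- Hamming weight of an edge-subset `β ∈ F_2^E`. -/
def hamWt {V : Type*} [Fintype V] [DecidableEq V] {G : SimpleGraph V}
    [DecidableRel G.Adj] (β : G.edgeSet → ZMod 2) : ℕ :=
  (Finset.univ.filter (fun e => β e ≠ 0)).card

section auxiliary

open Finset SimpleGraph

set_option linter.unusedSectionVars false

variable {V : Type*} [Fintype V] [DecidableEq V]

lemma zmod2_ne_zero : ∀ {x : ZMod 2}, x ≠ 0 → x = 1 := by decide

lemma zmod2_add_self : ∀ x : ZMod 2, x + x = 0 := by decide

lemma zmod2_eq_of_add_eq_zero : ∀ x y : ZMod 2, x + y = 0 → x = y := by decide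

/-- Parity of incidences of a vertex along a walk. -/
lemma walk_edge_sum {G : SimpleGraph V} {a b : V} (p : G.Walk a b) (v : V) :
    (p.edges.map (fun e => if v ∈ e then (1 : ZMod 2) else 0)).sum
      = (if v = a then 1 else 0) + (if v = b then 1 else 0) := by
  induction p with
  | nil => exact (zmod2_add_self _).symm
  | @cons a c b h p ih =>
      have hac : a ≠ c := h.ne
      rw [SimpleGraph.Walk.edges_cons, List.map_cons, List.sum_cons, ih]
      by_cases h1 : v = a <;> by_cases h2 : v = c <;> by_cases h3 : v = b <;>
        simp_all [Sym2.mem_iff] <;> decide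

lemma mulVec_eq_sum_support {G : SimpleGraph V} [DecidableRel G.Adj]
    (β : G.edgeSet → ZMod 2) (v : V) :
    (G.inc)ᵀ.mulVec β v
      = ∑ e ∈ Finset.univ.filter (fun e => β e ≠ 0),
          (if v ∈ (e : Sym2 V) then (1 : ZMod 2) else 0) := by
  rw [Matrix.mulVec, dotProduct]
  rw [← Finset.sum_filter_of_ne (p := fun e => β e ≠ 0)]
  · exact Finset.sum_congr rfl fun e he => by
      rw [zmod2_ne_zero (Finset.mem_filter.mp he).2, mul_one]
      rfl
  · intro e _ h hh
    exact h (by simp [hh, SimpleGraph.inc, Matrix.transpose_apply])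

/-- If from every edge of `H` one can find a second edge at the same vertex, and `H` has at
least one edge, then `H` has a cycle. -/
lemma exists_cycle_aux (H : SimpleGraph V)
    (hdeg : ∀ v x, H.Adj v x → ∃ y, H.Adj v y ∧ y ≠ x)
    {a b : V} (hab : H.Adj a b) :
    ∃ (v : V) (c : H.Walk v v), c.IsCycle := by
  classical
  have hepath : (Walk.cons hab Walk.nil).IsPath := by
    simp [Walk.cons_isPath_iff, hab.ne]
  obtain ⟨⟨u, w, p⟩, -, hmax⟩ := Finset.exists_max_image
    (Finset.univ : Finset (Σ u : V, Σ v : V, H.Path u v))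
    (fun x => x.2.2.1.length)
    ⟨⟨a, b, ⟨Walk.cons hab Walk.nil, hepath⟩⟩, Finset.mem_univ _⟩
  have hlen1 : 1 ≤ p.1.length := by
    have := hmax ⟨a, b, ⟨Walk.cons hab Walk.nil, hepath⟩⟩ (Finset.mem_univ _)
    simpa using this
  set r : H.Walk w u := p.1.reverse with hrdef
  have rp : r.IsPath := p.2.reverse
  have hrlen : r.length = p.1.length := Walk.length_reverse _
  have hrnotnil : ¬ r.Nil := by
    intro hn
    rw [Walk.nil_iff_length_eq] at hn
    omega
  obtain ⟨y, hvy, r', hr⟩ := Walk.not_nil_iff.mp hrnotnil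
  have rp' : r'.IsPath ∧ w ∉ r'.support := by
    rw [hr, Walk.cons_isPath_iff] at rp
    exact rp
  obtain ⟨z, hwz, hzy⟩ := hdeg w y hvy
  by_cases hzs : z ∈ r.support
  · -- z on the path: build a cycle
    have hzw : z ≠ w := fun h => H.irrefl (h ▸ hwz.symm)
    have hzr' : z ∈ r'.support := by
      rw [hr, Walk.support_cons] at hzs
      rcases List.mem_cons.mp hzs with h | h
      · exact absurd h hzw
      · exact h
    set s : H.Walk y z := r'.takeUntil z hzr' with hsdef
    have sp : s.IsPath := rp'.1.takeUntil hzr'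
    have hws : w ∉ s.support := fun h => rp'.2 (Walk.support_takeUntil_subset _ _ h)
    refine ⟨z, Walk.cons hwz.symm (Walk.cons hvy s), ?_⟩
    rw [Walk.cons_isCycle_iff]
    constructor
    · rw [Walk.cons_isPath_iff]
      exact ⟨sp, hws⟩
    · rw [Walk.edges_cons, List.mem_cons]
      rintro (h | h)
      · rw [Sym2.eq_iff] at h
        rcases h with ⟨h1, -⟩ | ⟨h1, -⟩
        · exact hzw h1
        · exact hzy h1
      · have := Walk.edges_takeUntil_subset r' hzr' (hsdef ▸ h)
        exact rp'.2 (Walk.snd_mem_support_of_mem_edges r' this)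
  · -- z not on the path: extend, contradicting maximality
    exfalso
    have hext : (Walk.cons hwz.symm r).IsPath := by
      rw [Walk.cons_isPath_iff]
      exact ⟨rp, hzs⟩
    have := hmax ⟨z, u, ⟨Walk.cons hwz.symm r, hext⟩⟩ (Finset.mem_univ _)
    simp only [Walk.length_cons] at this
    omega

end auxiliary

/-- The degree-parity map is injective on edge subsets of size at most `l` iff
`G` has no cycle of length at most `2*l` (equivalently, girth at least `2*l+1`). -/
theorem stmt2 {V : Type*} [Fintype V] [DecidableEq V] (G : SimpleGraph V)
    [DecidableRel G.Adj] (l : ℕ) :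
    Set.InjOn (fun β : G.edgeSet → ZMod 2 => (G.inc)ᵀ.mulVec β)
      {β | hamWt β ≤ l} ↔
      ¬ ∃ (v : V) (w : G.Walk v v), w.IsCycle ∧ w.length ≤ 2 * l := by
  classical
  constructor
  · -- injective ⇒ no short cycle
    intro hinj
    rintro ⟨v₀, w, hc, hlen⟩
    have hm3 : 3 ≤ w.length := hc.three_le_length
    have hnodup : w.edges.Nodup := hc.isCircuit.isTrail.edges_nodup
    set F : Finset G.edgeSet := Finset.univ.filter (fun e => (e : Sym2 V) ∈ w.edges) with hF
    have himg : F.image Subtype.val = w.edges.toFinset := by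
      ext x
      simp only [hF, Finset.mem_image, Finset.mem_filter, Finset.mem_univ, true_and,
        List.mem_toFinset]
      constructor
      · rintro ⟨e, he, rfl⟩
        exact he
      · intro hx
        exact ⟨⟨x, w.edges_subset_edgeSet hx⟩, hx, rfl⟩
    have hFcard : F.card = w.length := by
      rw [← SimpleGraph.Walk.length_edges, ← List.toFinset_card_of_nodup hnodup, ← himg,
        Finset.card_image_of_injective F Subtype.val_injective]
    set t := w.length - min w.length l with ht
    obtain ⟨F₁, hsub, hF₁⟩ := Finset.exists_subset_card_eq (s := F) (n := t) (by rw [hFcard]; omega)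
    set F₂ := F \ F₁ with hF₂def
    have hF₂card : F₂.card = min w.length l := by
      rw [hF₂def, Finset.card_sdiff_of_subset hsub, hFcard, hF₁]; omega
    set β₁ : G.edgeSet → ZMod 2 := fun e => if e ∈ F₁ then 1 else 0 with hβ₁
    set β₂ : G.edgeSet → ZMod 2 := fun e => if e ∈ F₂ then 1 else 0 with hβ₂
    have hwt : ∀ S : Finset G.edgeSet,
        hamWt (G := G) (fun e => if e ∈ S then (1 : ZMod 2) else 0) = S.card := by
      intro S
      unfold hamWt
      congr 1
      ext e
      simp
    have h₁mem : β₁ ∈ {β : G.edgeSet → ZMod 2 | hamWt β ≤ l} := by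
      simp only [Set.mem_setOf_eq, hβ₁, hwt, hF₁]; omega
    have h₂mem : β₂ ∈ {β : G.edgeSet → ZMod 2 | hamWt β ≤ l} := by
      simp only [Set.mem_setOf_eq, hβ₂, hwt F₂, hF₂card]; omega
    have hsumF : ∀ v, ∑ e ∈ F, (if v ∈ (e : Sym2 V) then (1 : ZMod 2) else 0) = 0 := by
      intro v
      have hbij : ∑ e ∈ F, (if v ∈ (e : Sym2 V) then (1 : ZMod 2) else 0)
          = ∑ x ∈ w.edges.toFinset, (if v ∈ x then (1 : ZMod 2) else 0) := by
        rw [← himg, Finset.sum_image (fun x _ y _ h => Subtype.val_injective h)]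
      rw [hbij, List.sum_toFinset _ hnodup, walk_edge_sum]
      exact zmod2_add_self _
    have heq : (fun β : G.edgeSet → ZMod 2 => (G.inc)ᵀ.mulVec β) β₁
        = (fun β : G.edgeSet → ZMod 2 => (G.inc)ᵀ.mulVec β) β₂ := by
      funext v
      simp only
      rw [mulVec_eq_sum_support, mulVec_eq_sum_support]
      have e₁ : Finset.univ.filter (fun e => β₁ e ≠ 0) = F₁ := by
        ext e; simp [hβ₁]
      have e₂ : Finset.univ.filter (fun e => β₂ e ≠ 0) = F₂ := by
        ext e; simp [hβ₂]
      rw [e₁, e₂]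
      apply zmod2_eq_of_add_eq_zero
      have hd : Disjoint F₁ F₂ := Finset.disjoint_sdiff
      have hcup : F₁ ∪ F₂ = F := Finset.union_sdiff_of_subset hsub
      have := hsumF v
      rw [← hcup, Finset.sum_union hd] at this
      exact this
    have hBB := hinj h₁mem h₂mem heq
    have hF₂ne : F₂.Nonempty := Finset.card_pos.mp (by rw [hF₂card]; omega)
    obtain ⟨e₀, he₀⟩ := hF₂ne
    have h0 : e₀ ∉ F₁ := (Finset.mem_sdiff.mp he₀).2
    have hcontr := congrFun hBB e₀
    simp only [hβ₁, hβ₂, if_neg h0, if_pos he₀] at hcontr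
    exact absurd hcontr (by decide)
  · -- no short cycle ⇒ injective
    intro hnc
    intro β₁ h₁ β₂ h₂ heq
    by_contra hne
    set γ : G.edgeSet → ZMod 2 := fun e => β₁ e - β₂ e with hγ
    have hγne : ∃ e, γ e ≠ 0 := by
      by_contra h
      push_neg at h
      exact hne (funext fun e => by
        have := h e
        rwa [hγ, sub_eq_zero] at this)
    have hker : ∀ v, (G.inc)ᵀ.mulVec γ v = 0 := by
      intro v
      have hlin : (G.inc)ᵀ.mulVec γ = (G.inc)ᵀ.mulVec β₁ - (G.inc)ᵀ.mulVec β₂ := by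
        rw [show γ = β₁ - β₂ from rfl, Matrix.mulVec_sub]
      rw [hlin]
      have : (G.inc)ᵀ.mulVec β₁ = (G.inc)ᵀ.mulVec β₂ := heq
      simp [this]
    set S := Finset.univ.filter (fun e => γ e ≠ 0) with hS
    have hScard : S.card ≤ 2 * l := by
      have hsub : S ⊆ Finset.univ.filter (fun e => β₁ e ≠ 0)
          ∪ Finset.univ.filter (fun e => β₂ e ≠ 0) := by
        intro e he
        by_contra hcon
        simp only [Finset.mem_union, Finset.mem_filter, Finset.mem_univ, true_and] at hcon
        push_neg at hcon
        exact (Finset.mem_filter.mp he).2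
          (by show β₁ e - β₂ e = 0; rw [hcon.1, hcon.2, sub_zero])
      calc S.card ≤ _ := Finset.card_le_card hsub
        _ ≤ _ + _ := Finset.card_union_le _ _
        _ ≤ 2 * l := by
            have := h₁; have := h₂
            simp only [Set.mem_setOf_eq, hamWt] at h₁ h₂
            omega
    have hev : ∀ v, 2 ∣ (S.filter (fun (e : G.edgeSet) => v ∈ (e : Sym2 V))).card := by
      intro v
      have hk := hker v
      rw [mulVec_eq_sum_support, ← hS, Finset.sum_boole] at hk
      exact (ZMod.natCast_eq_zero_iff _ _).mp hk
    set H : SimpleGraph V :=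
      { Adj := fun u v => ∃ h : G.Adj u v, γ ⟨s(u, v), h⟩ ≠ 0,
        symm := ⟨by
          rintro u v ⟨h, hg⟩
          refine ⟨h.symm, ?_⟩
          rwa [show (⟨s(v, u), h.symm⟩ : G.edgeSet) = ⟨s(u, v), h⟩ from
            Subtype.ext (Sym2.eq_swap)]⟩
        loopless := ⟨fun v h => G.irrefl h.1⟩ } with hH
    have hdeg : ∀ v x, H.Adj v x → ∃ y, H.Adj v y ∧ y ≠ x := by
      rintro v x ⟨hadj, hgx⟩
      set e₁ : G.edgeSet := ⟨s(v, x), hadj⟩ with he₁def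
      have he₁ : e₁ ∈ S.filter (fun (e : G.edgeSet) => v ∈ (e : Sym2 V)) := by
        rw [Finset.mem_filter, hS, Finset.mem_filter]
        exact ⟨⟨Finset.mem_univ _, hgx⟩, by simp [he₁def]⟩
      have hge2 : 1 < (S.filter (fun (e : G.edgeSet) => v ∈ (e : Sym2 V))).card := by
        have h2 := hev v
        have hpos : 0 < (S.filter (fun (e : G.edgeSet) => v ∈ (e : Sym2 V))).card :=
          Finset.card_pos.mpr ⟨e₁, he₁⟩
        omega
      obtain ⟨e₂, he₂, hne₂⟩ := Finset.exists_mem_ne hge2 e₁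
      have hv₂ : v ∈ (e₂ : Sym2 V) := (Finset.mem_filter.mp he₂).2
      have hγ₂ : γ e₂ ≠ 0 := by
        have h3 := (Finset.mem_filter.mp he₂).1
        rw [hS, Finset.mem_filter] at h3
        exact h3.2
      have hspec : s(v, Sym2.Mem.other' hv₂) = (e₂ : Sym2 V) := Sym2.other_spec' hv₂
      set y := Sym2.Mem.other' hv₂ with hy
      have hGvy : G.Adj v y := G.mem_edgeSet.mp (by rw [hspec]; exact e₂.2)
      refine ⟨y, ⟨hGvy, ?_⟩, ?_⟩
      · have : (⟨s(v, y), hGvy⟩ : G.edgeSet) = e₂ := Subtype.ext hspec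
        rw [this]
        exact hγ₂
      · intro hyx
        apply hne₂
        apply Subtype.ext
        rw [← hspec, hyx]
    have hedge : ∃ a b, H.Adj a b := by
      obtain ⟨e, he⟩ := hγne
      obtain ⟨es, hes⟩ := e
      revert he
      revert hes
      induction es using Sym2.ind with
      | _ a b =>
          intro hes he
          exact ⟨a, b, G.mem_edgeSet.mp hes, he⟩
    obtain ⟨a, b, hab⟩ := hedge
    obtain ⟨v, c, hcyc⟩ := exists_cycle_aux H hdeg hab
    apply hnc
    have hle : H ≤ G := fun u v h => h.1
    refine ⟨v, c.mapLe hle, hcyc.mapLe hle, ?_⟩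
    have hlenc : (c.mapLe hle).length = c.length := SimpleGraph.Walk.length_map _ _
    rw [hlenc]
    have hnd : c.edges.Nodup := hcyc.isCircuit.isTrail.edges_nodup
    have hsubS : c.edges.toFinset ⊆ S.image Subtype.val := by
      intro e he'
      have heH : e ∈ H.edgeSet := c.edges_subset_edgeSet (List.mem_toFinset.mp he')
      revert heH
      refine Sym2.ind (fun x y => ?_) e
      intro hxy
      obtain ⟨hGxy, hγ'⟩ := (H.mem_edgeSet.mp hxy)
      exact Finset.mem_image.mpr ⟨⟨s(x, y), hGxy⟩, by
        simp only [hS, Finset.mem_filter, Finset.mem_univ, true_and]; exact hγ', rfl⟩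
    calc c.length = c.edges.length := (SimpleGraph.Walk.length_edges _).symm
      _ = c.edges.toFinset.card := (List.toFinset_card_of_nodup hnd).symm
      _ ≤ (S.image Subtype.val).card := Finset.card_le_card hsubS
      _ ≤ S.card := Finset.card_image_le
      _ ≤ 2 * l := hScard
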